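/- Let (M, d) be a compact metric space, let f : M → M be a homeomorphism preserving a Borel probability measure μ, and let φ : M → ℝ be a Borel measurable μ-integrable function with φ(f(x)) = φ(x) for μ-a.e. x. Then there exists a Borel set N ⊂ M with μ(N) = 0 such that: (i) for all x, y ∈ M \ N with d(fⁿ(x), fⁿ(y)) → 0 as n → +∞, one has φ(x) = φ(y); and (ii) for all x, y ∈ M \ N with d(f^{-n}(x), f^{-n}(y)) → 0 as n → +∞, one has φ(x) = φ(y). -/

import Mathlib

open MeasureTheory Filter Set Finset
open scoped BoundedContinuousFunction

section Aux
variable {M : Type*} [MeasurableSpace M] {μ : Measure M} {T : M → M}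

lemma integral_comp_mp (hT : MeasurePreserving T μ μ)
    {g : M → ℝ} (hg : AEStronglyMeasurable g μ) :
    ∫ x, g (T x) ∂μ = ∫ x, g x ∂μ := by
  conv_rhs => rw [← hT.map_eq]
  rw [integral_map hT.measurable.aemeasurable (by rwa [hT.map_eq])]

lemma integrable_birkhoffSum (hT : MeasurePreserving T μ μ) {g : M → ℝ}
    (hg : Integrable g μ) (n : ℕ) : Integrable (birkhoffSum T g n) μ := by
  have : birkhoffSum T g n = fun x => ∑ k ∈ Finset.range n, (g ∘ T^[k]) x := rfl
  rw [this]
  exact integrable_finset_sum _ fun k _ =>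
    ((hT.iterate k).integrable_comp hg.aestronglyMeasurable).2 hg

lemma measurable_birkhoffSum (hTm : Measurable T) {g : M → ℝ}
    (hg : Measurable g) (n : ℕ) : Measurable (birkhoffSum T g n) := by
  have : birkhoffSum T g n = fun x => ∑ k ∈ Finset.range n, g (T^[k] x) := rfl
  rw [this]
  exact Finset.measurable_sum _ fun k _ => hg.comp (hTm.iterate k)

/-- Garsia's maximal ergodic lemma, level-set form. -/
lemma garsia [IsProbabilityMeasure μ] (hT : MeasurePreserving T μ μ) {h : M → ℝ}
    (hm : Measurable h) (hi : Integrable h μ) (N : ℕ) :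
    0 ≤ ∫ x in {x | 0 < (Finset.range (N + 1)).sup' Finset.nonempty_range_add_one
        fun n => birkhoffSum T h n x}, h x ∂μ := by
  set S : ℕ → M → ℝ := fun n x => birkhoffSum T h n x with hS
  set MN : M → ℝ := fun x => (Finset.range (N + 1)).sup' Finset.nonempty_range_add_one
      fun n => S n x with hMN
  have hSm : ∀ n, Measurable (S n) := fun n => measurable_birkhoffSum hT.measurable hm n
  have hMNm : Measurable MN := Finset.measurable_range_sup'' fun k _ => hSm k
  have hMN0 : ∀ x, 0 ≤ MN x := by
    intro x
    have : S 0 x ≤ MN x :=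
      Finset.le_sup' (fun n => S n x) (Finset.mem_range.2 (Nat.succ_pos N))
    simpa [hS, birkhoffSum_zero] using this
  set F : Set M := {x | 0 < MN x} with hF
  have hFm : MeasurableSet F := measurableSet_lt measurable_const hMNm
  have key : ∀ x, MN x - MN (T x) ≤ F.indicator h x := by
    intro x
    by_cases hx : x ∈ F
    · rw [Set.indicator_of_mem hx]
      obtain ⟨n, hn, heq⟩ := Finset.exists_mem_eq_sup' (Finset.nonempty_range_add_one) fun n => S n x
      have hn' : n ≤ N := Nat.lt_succ_iff.1 (Finset.mem_range.1 hn)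
      match n, heq, hn' with
      | 0, heq, _ =>
        exfalso
        have : MN x = 0 := by simpa [hS, birkhoffSum_zero] using heq
        exact absurd this (ne_of_gt hx)
      | m + 1, heq, hn' =>
        have e1 : S (m + 1) x = h x + S m (T x) := birkhoffSum_succ' T h m x
        have h2 : S m (T x) ≤ MN (T x) :=
          Finset.le_sup' (fun n => S n (T x))
            (Finset.mem_range.2 (lt_of_le_of_lt (Nat.le_of_succ_le hn') (Nat.lt_succ_self N)))
        have : MN x = h x + S m (T x) := heq.trans e1
        linarith
    · rw [Set.indicator_of_notMem hx]
      have h1 : MN x = 0 := le_antisymm (not_lt.1 hx) (hMN0 x)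
      have h2 := hMN0 (T x)
      linarith
  have hMNi : Integrable MN μ := by
    refine Integrable.mono
      (integrable_finset_sum (Finset.range (N + 1))
        (fun n _ => (integrable_birkhoffSum hT hi n).abs))
      hMNm.aestronglyMeasurable ?_
    filter_upwards with x
    rw [Real.norm_eq_abs, Real.norm_eq_abs, abs_of_nonneg (hMN0 x),
      abs_of_nonneg (Finset.sum_nonneg fun i _ => abs_nonneg _)]
    refine Finset.sup'_le _ _ fun n hn => ?_
    exact le_trans (le_abs_self _)
      (Finset.single_le_sum (fun i _ => abs_nonneg (S i x)) hn)
  have hMNTi : Integrable (fun x => MN (T x)) μ :=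
    (hT.integrable_comp hMNm.aestronglyMeasurable).2 hMNi
  have hint0 : ∫ x, (MN x - MN (T x)) ∂μ = 0 := by
    rw [integral_sub hMNi hMNTi, integral_comp_mp hT hMNm.aestronglyMeasurable, sub_self]
  have hle : ∫ x, (MN x - MN (T x)) ∂μ ≤ ∫ x, F.indicator h x ∂μ :=
    integral_mono (hMNi.sub hMNTi) (hi.indicator hFm) key
  rw [hint0, integral_indicator hFm] at hle
  exact hle

/-- Maximal ergodic inequality. -/
lemma maximal_ineq [IsProbabilityMeasure μ] (hT : MeasurePreserving T μ μ) {g : M → ℝ}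
    (hm : Measurable g) (hi : Integrable g μ) {α : ℝ} (hα : 0 < α) :
    μ {x | ∃ n : ℕ, 1 ≤ n ∧ (n : ℝ) * α < birkhoffSum T (fun y => |g y|) n x} ≤
      ENNReal.ofReal ((∫ x, |g x| ∂μ) / α) := by
  set h : M → ℝ := fun x => |g x| - α with hh
  have hmh : Measurable h := hm.abs.sub measurable_const
  have hih : Integrable h μ := hi.abs.sub (integrable_const α)
  have hsum : ∀ n x, birkhoffSum T h n x = birkhoffSum T (fun y => |g y|) n x - n * α := by
    intro n x
    simp [birkhoffSum, hh, Finset.sum_sub_distrib, Finset.sum_const, nsmul_eq_mul]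
  set E : ℕ → Set M := fun N => {x | 0 < (Finset.range (N + 1)).sup'
      Finset.nonempty_range_add_one fun n => birkhoffSum T h n x} with hE
  have hI0 : 0 ≤ ∫ x, |g x| ∂μ := integral_nonneg fun x => abs_nonneg _
  have hEbound : ∀ N, μ (E N) ≤ ENNReal.ofReal ((∫ x, |g x| ∂μ) / α) := by
    intro N
    have hFm : MeasurableSet (E N) := measurableSet_lt measurable_const
      (Finset.measurable_range_sup'' fun k _ =>
        measurable_birkhoffSum hT.measurable hmh k)
    have h0 : 0 ≤ ∫ x in E N, h x ∂μ := garsia hT hmh hih N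
    have e1 : ∫ x in E N, h x ∂μ = (∫ x in E N, |g x| ∂μ) - (μ (E N)).toReal * α := by
      rw [hh]
      rw [integral_sub (hi.abs.integrableOn) (integrableOn_const (measure_ne_top μ _))]
      rw [setIntegral_const]
      simp [smul_eq_mul, Measure.real]
    have e2 : ∫ x in E N, |g x| ∂μ ≤ ∫ x, |g x| ∂μ :=
      setIntegral_le_integral hi.abs (Filter.Eventually.of_forall fun x => abs_nonneg _)
    have e3 : (μ (E N)).toReal * α ≤ ∫ x, |g x| ∂μ := by
      rw [e1] at h0
      linarith
    rw [ENNReal.le_ofReal_iff_toReal_le (measure_ne_top μ _) (div_nonneg hI0 hα.le)]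
    rw [le_div_iff₀ hα]
    linarith
  have hEsub : {x | ∃ n : ℕ, 1 ≤ n ∧ (n : ℝ) * α < birkhoffSum T (fun y => |g y|) n x}
      = ⋃ N, E N := by
    ext x
    simp only [Set.mem_setOf_eq, Set.mem_iUnion, hE]
    constructor
    · rintro ⟨n, hn1, hn2⟩
      refine ⟨n, lt_of_lt_of_le ?_ (Finset.le_sup' (fun m => birkhoffSum T h m x)
        (Finset.mem_range.2 (Nat.lt_succ_self n)))⟩
      rw [hsum]
      linarith
    · rintro ⟨N, hN⟩
      obtain ⟨n, hn, heq⟩ := Finset.exists_mem_eq_sup' (Finset.nonempty_range_add_one)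
        fun m => birkhoffSum T h m x
      rw [heq] at hN
      rcases Nat.eq_zero_or_pos n with h0 | h0
      · exfalso; rw [h0] at hN; simpa [birkhoffSum_zero] using hN
      · refine ⟨n, h0, ?_⟩
        rw [hsum] at hN
        linarith
  rw [hEsub]
  have hmono : Monotone E := by
    intro a b hab x hx
    rw [hE] at hx ⊢
    simp only [Set.mem_setOf_eq] at hx ⊢
    obtain ⟨n, hn, heq⟩ := Finset.exists_mem_eq_sup' (Finset.nonempty_range_add_one)
      fun m => birkhoffSum T h m x
    rw [heq] at hx
    refine lt_of_lt_of_le hx (Finset.le_sup' (fun m => birkhoffSum T h m x) (Finset.mem_range.2 ?_))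
    have := Finset.mem_range.1 hn
    omega
  rw [hmono.directed_le.measure_iUnion]
  exact iSup_le hEbound

lemma ae_iterate_eq (hT : MeasurePreserving T μ μ) {φ : M → ℝ}
    (hinv : ∀ᵐ x ∂μ, φ (T x) = φ x) (n : ℕ) : ∀ᵐ x ∂μ, φ (T^[n] x) = φ x := by
  induction n with
  | zero => simp
  | succ n ih =>
    have h1 : ∀ᵐ x ∂μ, φ (T^[n] (T x)) = φ (T x) :=
      hT.quasiMeasurePreserving.tendsto_ae.eventually ih
    filter_upwards [h1, hinv] with x h1 h2
    rw [Function.iterate_succ_apply, h1, h2]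

end Aux

lemma tendsto_abs_sub_of_uniformContinuous {X : Type*} [MetricSpace X] {f : X → ℝ}
    (hu : UniformContinuous f) {a b : ℕ → X}
    (h : Tendsto (fun n => dist (a n) (b n)) atTop (nhds 0)) :
    Tendsto (fun n => |f (a n) - f (b n)|) atTop (nhds 0) := by
  rw [Metric.tendsto_atTop] at h ⊢
  intro ε hε
  obtain ⟨δ, hδ, hfd⟩ := Metric.uniformContinuous_iff.1 hu ε hε
  obtain ⟨N, hN⟩ := h δ hδ
  refine ⟨N, fun n hn => ?_⟩
  have h1 : dist (a n) (b n) < δ := by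
    have := hN n hn
    rwa [Real.dist_eq, sub_zero, abs_of_nonneg dist_nonneg] at this
  have := hfd h1
  rwa [Real.dist_eq, sub_zero, abs_abs, ← Real.dist_eq]

/-- Hopf argument, one-sided version. -/
lemma hopf_forward {M : Type*} [MetricSpace M] [CompactSpace M] [MeasurableSpace M] [BorelSpace M]
    (μ : Measure M) [IsProbabilityMeasure μ]
    {T : M → M} (hT : MeasurePreserving T μ μ)
    {φ : M → ℝ} (hφmeas : Measurable φ) (hφint : Integrable φ μ)
    (hφinv : ∀ᵐ x ∂μ, φ (T x) = φ x) :
    ∃ N : Set M, MeasurableSet N ∧ μ N = 0 ∧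
      ∀ x y : M, x ∉ N → y ∉ N →
        Tendsto (fun n => dist (T^[n] x) (T^[n] y)) atTop (nhds 0) → φ x = φ y := by
  have happrox : ∀ k : ℕ, ∃ ψ : M →ᵇ ℝ, (∫ x, ‖φ x - ψ x‖ ∂μ) ≤ (4:ℝ)⁻¹ ^ k ∧ Integrable ψ μ :=
    fun k => hφint.exists_boundedContinuous_integral_sub_le (by positivity)
  choose ψ hψ1 hψ2 using happrox
  set g : ℕ → M → ℝ := fun k x => φ x - ψ k x with hg
  have hgm : ∀ k, Measurable (g k) := fun k => hφmeas.sub ((ψ k).continuous.measurable)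
  have hgi : ∀ k, Integrable (g k) μ := fun k => hφint.sub (hψ2 k)
  set B : ℕ → Set M := fun k => {x | ∃ n : ℕ, 1 ≤ n ∧
      (n : ℝ) * (2:ℝ)⁻¹ ^ k < birkhoffSum T (fun y => |g k y|) n x} with hB
  have hBk : ∀ k, μ (B k) ≤ ENNReal.ofReal ((2:ℝ)⁻¹ ^ k) := by
    intro k
    refine (maximal_ineq hT (hgm k) (hgi k) (by positivity : (0:ℝ) < (2:ℝ)⁻¹ ^ k)).trans ?_
    apply ENNReal.ofReal_le_ofReal
    rw [div_le_iff₀ (by positivity)]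
    calc ∫ x, |g k x| ∂μ = ∫ x, ‖φ x - ψ k x‖ ∂μ := by simp [hg, Real.norm_eq_abs]
    _ ≤ (4:ℝ)⁻¹ ^ k := hψ1 k
    _ = (2:ℝ)⁻¹ ^ k * (2:ℝ)⁻¹ ^ k := by rw [← mul_pow]; norm_num
  have hBsum : ∑' k, μ (B k) ≠ ⊤ := by
    apply ne_top_of_le_ne_top _ (ENNReal.tsum_le_tsum hBk)
    rw [← ENNReal.ofReal_tsum_of_nonneg (fun k => by positivity)
      (summable_geometric_of_lt_one (by norm_num) (by norm_num))]
    exact ENNReal.ofReal_ne_top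
  set N1 : Set M := limsup B atTop with hN1
  have hN1null : μ N1 = 0 := measure_limsup_atTop_eq_zero hBsum
  set N2 : Set M := {x | ∃ n : ℕ, φ (T^[n] x) ≠ φ x} with hN2
  have hN2null : μ N2 = 0 := by
    have he : N2 = ⋃ n : ℕ, {x | φ (T^[n] x) ≠ φ x} := by ext x; simp [hN2]
    rw [he]
    exact measure_iUnion_null fun n => by simpa [ae_iff] using ae_iterate_eq hT hφinv n
  refine ⟨toMeasurable μ (N1 ∪ N2), measurableSet_toMeasurable _ _, by
    rw [measure_toMeasurable]; exact measure_union_null hN1null hN2null, ?_⟩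
  intro x y hx hy hdist
  have hx' : x ∉ N1 ∪ N2 := fun h => hx (subset_toMeasurable μ _ h)
  have hy' : y ∉ N1 ∪ N2 := fun h => hy (subset_toMeasurable μ _ h)
  have hxB : ∀ᶠ k in atTop, x ∉ B k := by
    have h2 : ¬ ∃ᶠ k in atTop, x ∈ B k := fun h => hx' (Or.inl (mem_limsup_iff_frequently_mem.2 h))
    simpa [Filter.not_frequently] using h2
  have hyB : ∀ᶠ k in atTop, y ∉ B k := by
    have h2 : ¬ ∃ᶠ k in atTop, y ∈ B k := fun h => hy' (Or.inl (mem_limsup_iff_frequently_mem.2 h))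
    simpa [Filter.not_frequently] using h2
  have hxI : ∀ n : ℕ, φ (T^[n] x) = φ x := by
    intro n; by_contra h; exact hx' (Or.inr ⟨n, h⟩)
  have hyI : ∀ n : ℕ, φ (T^[n] y) = φ y := by
    intro n; by_contra h; exact hy' (Or.inr ⟨n, h⟩)
  have hkey : ∀ k : ℕ, x ∉ B k → y ∉ B k → |φ x - φ y| ≤ 2 * (2:ℝ)⁻¹ ^ k := by
    intro k hxk hyk
    have hn : ∀ n : ℕ, 1 ≤ n → |φ x - φ y| ≤ (2:ℝ)⁻¹ ^ k + (2:ℝ)⁻¹ ^ k +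
        (n : ℝ)⁻¹ * ∑ i ∈ Finset.range n, |ψ k (T^[i] x) - ψ k (T^[i] y)| := by
      intro n hn1
      have hnpos : (0:ℝ) < n := by exact_mod_cast hn1
      have hSx : birkhoffSum T φ n x = n * φ x := by
        simp [birkhoffSum, hxI, Finset.sum_const, nsmul_eq_mul]
      have hSy : birkhoffSum T φ n y = n * φ y := by
        simp [birkhoffSum, hyI, Finset.sum_const, nsmul_eq_mul]
      have hxk' : birkhoffSum T (fun z => |g k z|) n x ≤ n * (2:ℝ)⁻¹ ^ k := by
        by_contra h
        exact hxk ⟨n, hn1, lt_of_not_ge h⟩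
      have hyk' : birkhoffSum T (fun z => |g k z|) n y ≤ n * (2:ℝ)⁻¹ ^ k := by
        by_contra h
        exact hyk ⟨n, hn1, lt_of_not_ge h⟩
      have hdiff : |birkhoffSum T φ n x - birkhoffSum T φ n y| ≤
          birkhoffSum T (fun z => |g k z|) n x + birkhoffSum T (fun z => |g k z|) n y +
          ∑ i ∈ Finset.range n, |ψ k (T^[i] x) - ψ k (T^[i] y)| := by
        have e1 : birkhoffSum T φ n x - birkhoffSum T φ n y =
            ∑ i ∈ Finset.range n,
              (g k (T^[i] x) - g k (T^[i] y) + (ψ k (T^[i] x) - ψ k (T^[i] y))) := by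
          rw [birkhoffSum, birkhoffSum, ← Finset.sum_sub_distrib]
          refine Finset.sum_congr rfl fun i _ => ?_
          simp only [hg]
          ring
        rw [e1]
        refine (Finset.abs_sum_le_sum_abs _ _).trans ?_
        have e2 : birkhoffSum T (fun z => |g k z|) n x + birkhoffSum T (fun z => |g k z|) n y +
            ∑ i ∈ Finset.range n, |ψ k (T^[i] x) - ψ k (T^[i] y)| =
            ∑ i ∈ Finset.range n,
              (|g k (T^[i] x)| + |g k (T^[i] y)| + |ψ k (T^[i] x) - ψ k (T^[i] y)|) := by
          rw [birkhoffSum, birkhoffSum, ← Finset.sum_add_distrib, ← Finset.sum_add_distrib]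
        rw [e2]
        refine Finset.sum_le_sum fun i _ => ?_
        have h3 : |g k (T^[i] x) - g k (T^[i] y)| ≤ |g k (T^[i] x)| + |g k (T^[i] y)| :=
          abs_sub _ _
        calc |g k (T^[i] x) - g k (T^[i] y) + (ψ k (T^[i] x) - ψ k (T^[i] y))|
            ≤ |g k (T^[i] x) - g k (T^[i] y)| + |ψ k (T^[i] x) - ψ k (T^[i] y)| := abs_add_le _ _
          _ ≤ |g k (T^[i] x)| + |g k (T^[i] y)| + |ψ k (T^[i] x) - ψ k (T^[i] y)| := by linarith
      have e3 : |φ x - φ y| = (n:ℝ)⁻¹ * |birkhoffSum T φ n x - birkhoffSum T φ n y| := by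
        rw [hSx, hSy, ← mul_sub, abs_mul, abs_of_pos hnpos]
        field_simp
      rw [e3]
      have h4 := mul_le_mul_of_nonneg_left hdiff (inv_nonneg.2 hnpos.le)
      refine h4.trans ?_
      rw [mul_add, mul_add]
      have hb1 : (n:ℝ)⁻¹ * birkhoffSum T (fun z => |g k z|) n x ≤ (2:ℝ)⁻¹ ^ k := by
        rw [inv_mul_le_iff₀ hnpos]
        linarith
      have hb2 : (n:ℝ)⁻¹ * birkhoffSum T (fun z => |g k z|) n y ≤ (2:ℝ)⁻¹ ^ k := by
        rw [inv_mul_le_iff₀ hnpos]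
        linarith
      linarith
    have hcesaro : Tendsto (fun n : ℕ => (n:ℝ)⁻¹ *
        ∑ i ∈ Finset.range n, |ψ k (T^[i] x) - ψ k (T^[i] y)|) atTop (nhds 0) := by
      have hu : UniformContinuous (ψ k) :=
        CompactSpace.uniformContinuous_of_continuous (ψ k).continuous
      have ht := tendsto_abs_sub_of_uniformContinuous hu hdist
      have h5 := ht.cesaro
      simpa [smul_eq_mul] using h5
    have hev : ∀ᶠ (n : ℕ) in atTop, |φ x - φ y| ≤ (2:ℝ)⁻¹ ^ k + (2:ℝ)⁻¹ ^ k +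
        (n : ℝ)⁻¹ * ∑ i ∈ Finset.range n, |ψ k (T^[i] x) - ψ k (T^[i] y)| :=
      eventually_atTop.2 ⟨1, fun n h => hn n h⟩
    have hlim : Tendsto (fun n : ℕ => (2:ℝ)⁻¹ ^ k + (2:ℝ)⁻¹ ^ k +
        (n : ℝ)⁻¹ * ∑ i ∈ Finset.range n, |ψ k (T^[i] x) - ψ k (T^[i] y)|) atTop
        (nhds ((2:ℝ)⁻¹ ^ k + (2:ℝ)⁻¹ ^ k + 0)) :=
      tendsto_const_nhds.add hcesaro
    have h6 := ge_of_tendsto hlim hev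
    linarith
  have hev2 : ∀ᶠ k in atTop, |φ x - φ y| ≤ 2 * (2:ℝ)⁻¹ ^ k := by
    filter_upwards [hxB, hyB] with k h1 h2
    exact hkey k h1 h2
  have hlim2 : Tendsto (fun k : ℕ => 2 * (2:ℝ)⁻¹ ^ k) atTop (nhds 0) := by
    have h7 : Tendsto (fun k : ℕ => (2:ℝ)⁻¹ ^ k) atTop (nhds 0) :=
      tendsto_pow_atTop_nhds_zero_of_lt_one (by norm_num) (by norm_num)
    simpa using h7.const_mul 2
  have habs : |φ x - φ y| ≤ 0 := ge_of_tendsto hlim2 hev2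
  have hz : |φ x - φ y| = 0 := le_antisymm habs (abs_nonneg _)
  exact sub_eq_zero.1 (abs_eq_zero.1 hz)

/-- Let `(M, d)` be a compact metric space, `f : M → M` a homeomorphism
preserving a Borel probability measure `μ`, and `φ : M → ℝ` a Borel measurable
`μ`-integrable function with `φ ∘ f = φ` a.e. Then there is a Borel set `N` of measure
zero such that: (i) if `x, y ∉ N` and `d(fⁿ x, fⁿ y) → 0` as `n → ∞`, then `φ x = φ y`;
and (ii) if `x, y ∉ N` and `d(f⁻ⁿ x, f⁻ⁿ y) → 0` as `n → ∞`, then `φ x = φ y`. -/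
theorem invariant_function_constant_on_stable_sets
    {M : Type*} [MetricSpace M] [CompactSpace M] [MeasurableSpace M] [BorelSpace M]
    (μ : Measure M) [IsProbabilityMeasure μ]
    (f : M ≃ₜ M) (hf : MeasurePreserving f μ μ)
    (φ : M → ℝ) (hφmeas : Measurable φ) (hφint : Integrable φ μ)
    (hφinv : ∀ᵐ x ∂μ, φ (f x) = φ x) :
    ∃ N : Set M, MeasurableSet N ∧ μ N = 0 ∧
      (∀ x y : M, x ∉ N → y ∉ N →
        Filter.Tendsto (fun n => dist ((⇑f)^[n] x) ((⇑f)^[n] y)) Filter.atTop (nhds 0) →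
        φ x = φ y) ∧
      (∀ x y : M, x ∉ N → y ∉ N →
        Filter.Tendsto (fun n => dist ((⇑f.symm)^[n] x) ((⇑f.symm)^[n] y))
          Filter.atTop (nhds 0) →
        φ x = φ y) := by
  obtain ⟨N₁, hN₁m, hN₁0, hN₁⟩ := hopf_forward μ hf hφmeas hφint hφinv
  have hfsymm : MeasurePreserving ⇑f.symm μ μ := by
    have h1 : MeasurePreserving ⇑f.toMeasurableEquiv μ μ := by
      rwa [Homeomorph.toMeasurableEquiv_coe]
    have h2 := MeasurePreserving.symm f.toMeasurableEquiv h1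
    rwa [Homeomorph.toMeasurableEquiv_symm_coe] at h2
  have hφinv' : ∀ᵐ x ∂μ, φ (f.symm x) = φ x := by
    have h3 : ∀ᵐ x ∂μ, φ (f (f.symm x)) = φ (f.symm x) :=
      hfsymm.quasiMeasurePreserving.tendsto_ae.eventually hφinv
    filter_upwards [h3] with x h3
    rw [Homeomorph.apply_symm_apply] at h3
    exact h3.symm
  obtain ⟨N₂, hN₂m, hN₂0, hN₂⟩ := hopf_forward μ hfsymm hφmeas hφint hφinv'
  refine ⟨N₁ ∪ N₂, hN₁m.union hN₂m, measure_union_null hN₁0 hN₂0, ?_, ?_⟩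
  · intro x y hx hy h
    exact hN₁ x y (fun h' => hx (Or.inl h')) (fun h' => hy (Or.inl h')) h
  · intro x y hx hy h
    exact hN₂ x y (fun h' => hx (Or.inr h')) (fun h' => hy (Or.inr h')) h
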